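/- A ring R is strongly nil-clean (i.e., every element of R is strongly nil-clean) if and only if R is both a CSNC ring and a semi-potent ring. -/

import Mathlib

/-- An element `a` of a ring is *clean* if `a = e + u` for some idempotent `e` and unit `u`. -/
def IsCleanElem {R : Type*} [Ring R] (a : R) : Prop :=
  ∃ e u : R, IsIdempotentElem e ∧ IsUnit u ∧ a = e + u

/-- An element `a` of a ring is *strongly nil-clean* if `a = e + q` for some idempotent `e`
and nilpotent `q` with `e * q = q * e`. -/
def IsStronglyNilCleanElem {R : Type*} [Ring R] (a : R) : Prop :=
  ∃ e q : R, IsIdempotentElem e ∧ IsNilpotent q ∧ e * q = q * e ∧ a = e + q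

/-- A ring is a *CSNC ring* if every clean element is strongly nil-clean. -/
def IsCSNCRing (R : Type*) [Ring R] : Prop :=
  ∀ a : R, IsCleanElem a → IsStronglyNilCleanElem a

/-- A ring is *semi-potent* if every left ideal not contained in the Jacobson radical
contains a nonzero idempotent. -/
def IsSemipotentRing (R : Type*) [Ring R] : Prop :=
  ∀ I : Ideal R, ¬ I ≤ (⊥ : Ideal R).jacobson → ∃ e ∈ I, e ≠ 0 ∧ IsIdempotentElem e

section Aux

variable {R : Type*} [Ring R]

/-- extract two-sided inverse from IsUnit -/
lemma s7_unit_pair {u : R} (hu : IsUnit u) : ∃ v, u * v = 1 ∧ v * u = 1 := by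
  obtain ⟨U, rfl⟩ := hu
  exact ⟨↑U⁻¹, U.mul_inv, U.inv_mul⟩

lemma s7_comm_inv {u v a : R} (huv : u * v = 1) (hvu : v * u = 1)
    (h : a * u = u * a) : a * v = v * a := by
  calc a * v = v * u * (a * v) := by rw [hvu, one_mul]
    _ = v * (u * a) * v := by noncomm_ring
    _ = v * (a * u) * v := by rw [h]
    _ = v * a * (u * v) := by noncomm_ring
    _ = v * a := by rw [huv, mul_one]

lemma s7_mem_jac_iff {x : R} :
    x ∈ (⊥ : Ideal R).jacobson ↔ ∀ y : R, IsUnit (y * x + 1) := by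
  constructor
  · intro hx y
    have h := Ideal.mem_jacobson_iff.mp hx
    obtain ⟨z, hz⟩ := h y
    rw [Submodule.mem_bot, sub_eq_zero] at hz
    have hz1 : z * (y * x + 1) = 1 := by
      have e : z * (y * x + 1) = z * y * x + z := by noncomm_ring
      rw [e, hz]
    obtain ⟨z₂, hz₂⟩ := h (-(z * y))
    rw [Submodule.mem_bot, sub_eq_zero] at hz₂
    have hz2 : z₂ * z = 1 := by
      have hz' : z = 1 - z * y * x := by rw [← hz]; noncomm_ring
      calc z₂ * z = z₂ * (1 - z * y * x) := by rw [← hz']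
        _ = z₂ * -(z * y) * x + z₂ := by noncomm_ring
        _ = 1 := hz₂
    have hval : (y * x + 1) * z = 1 := by
      have : z₂ = y * x + 1 := by
        calc z₂ = z₂ * (z * (y * x + 1)) := by rw [hz1, mul_one]
          _ = z₂ * z * (y * x + 1) := by rw [mul_assoc]
          _ = y * x + 1 := by rw [hz2, one_mul]
      rw [← this, hz2]
    exact ⟨⟨y * x + 1, z, hval, hz1⟩, rfl⟩
  · intro h
    apply Ideal.mem_jacobson_iff.mpr
    intro y
    obtain ⟨v, _, hvu⟩ := s7_unit_pair (h y)
    refine ⟨v, ?_⟩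
    rw [Submodule.mem_bot]
    have : v * y * x + v - 1 = v * (y * x + 1) - 1 := by noncomm_ring
    rw [this, hvu, sub_self]

lemma s7_swap {a b : R} (h : IsUnit (a * b + 1)) : IsUnit (b * a + 1) := by
  obtain ⟨v, hv1, hv2⟩ := s7_unit_pair h
  refine ⟨⟨b * a + 1, 1 - b * v * a, ?_, ?_⟩, rfl⟩
  · have e : (b * a + 1) * (1 - b * v * a) = 1 + b * a - b * ((a * b + 1) * v) * a := by
      noncomm_ring
    rw [e, hv1]; noncomm_ring
  · have e : (1 - b * v * a) * (b * a + 1) = 1 + b * a - b * (v * (a * b + 1)) * a := by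
      noncomm_ring
    rw [e, hv2]; noncomm_ring

lemma s7_jac_mul_right {x : R} (hx : x ∈ (⊥ : Ideal R).jacobson) (b : R) :
    x * b ∈ (⊥ : Ideal R).jacobson := by
  rw [s7_mem_jac_iff]
  intro y
  have h1 : IsUnit ((b * y) * x + 1) := s7_mem_jac_iff.mp hx (b * y)
  have h2 : IsUnit ((y * x) * b + 1) := by
    have := s7_swap (a := b) (b := y * x) (by rwa [show b * (y * x) = b * y * x by rw [mul_assoc]])
    exact this
  rwa [show y * (x * b) + 1 = y * x * b + 1 by rw [mul_assoc]]

lemma s7_one_add_unit {x : R} (hx : x ∈ (⊥ : Ideal R).jacobson) : IsUnit (1 + x) := by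
  have := s7_mem_jac_iff.mp hx 1
  rwa [one_mul, add_comm] at this

lemma s7_idem_zero {e : R} (he : e * e = e) (hn : IsNilpotent e) : e = 0 := by
  obtain ⟨n, hn⟩ := hn
  have key : ∀ k : ℕ, e = e ^ (k + 1) := by
    intro k
    induction k with
    | zero => simp
    | succ k ih => rw [pow_succ, ← ih, he]
  have := key n
  rw [pow_succ, hn, zero_mul] at this
  exact this

lemma s7_two_comm (t : R) : Commute (2 : R) t := by
  rw [← one_add_one_eq_two]
  exact (Commute.one_left t).add_left (Commute.one_left t)

lemma s7_pow_sub_self {y : R} (h : IsNilpotent (y - y * y)) :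
    ∀ n : ℕ, 1 ≤ n → IsNilpotent (y ^ n - y) := by
  intro n hn
  induction n, hn using Nat.le_induction with
  | base => simpa using IsNilpotent.zero
  | succ n hn ih =>
    have cyy : Commute y (y ^ n - y) :=
      ((Commute.refl y).pow_right n).sub_right (Commute.refl y)
    have hA : IsNilpotent (y * (y ^ n - y)) := cyy.isNilpotent_mul_left ih
    have hB : IsNilpotent (y * y - y) := by
      have := h.neg
      rwa [neg_sub] at this
    have cBy : Commute (y * y - y) y :=
      ((Commute.refl y).mul_left (Commute.refl y)).sub_left (Commute.refl y)
    have cAB : Commute (y * (y ^ n - y)) (y * y - y) := by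
      have c1 : Commute (y * y - y) (y ^ n - y) :=
        (cBy.pow_right n).sub_right cBy
      exact (cBy.symm.mul_left c1.symm).symm.symm
    have key : y ^ (n + 1) - y = y * (y ^ n - y) + (y * y - y) := by
      rw [pow_succ']
      noncomm_ring
    rw [key]
    exact cAB.isNilpotent_add hA hB

lemma s7_core (x : R) (h : IsNilpotent (x - x * x)) :
    ∃ n : ℕ, 1 ≤ n ∧ ∃ e v : R, e * e = e ∧ e = v * x ^ n ∧ 1 - e = v * (1 - x) ^ n ∧
      x * e = e * x ∧ IsNilpotent (x - e) := by
  obtain ⟨k, hk⟩ := h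
  set n := k + 1 with hn
  have cx1 : Commute x (1 - x) := (Commute.one_right x).sub_right (Commute.refl x)
  have hxx : x * (1 - x) = x - x * x := by noncomm_ring
  have h1 : x ^ n * (1 - x) ^ n = 0 := by
    rw [← cx1.mul_pow, hxx, hn, pow_succ, hk, zero_mul]
  have hz1 : IsNilpotent (x ^ n - x) := s7_pow_sub_self ⟨k, hk⟩ n (Nat.le_add_left 1 k)
  have hy : IsNilpotent ((1 - x) - (1 - x) * (1 - x)) := by
    have e : (1 - x) - (1 - x) * (1 - x) = x - x * x := by noncomm_ring
    rw [e]; exact ⟨k, hk⟩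
  have hz2 : IsNilpotent ((1 - x) ^ n - (1 - x)) := s7_pow_sub_self hy n (Nat.le_add_left 1 k)
  have c12 : Commute (x ^ n - x) ((1 - x) ^ n - (1 - x)) := by
    have ha : Commute (x ^ n - x) (1 - x) := (cx1.pow_left n).sub_left cx1
    exact (ha.pow_right n).sub_right ha
  have hznil : IsNilpotent ((x ^ n - x) + ((1 - x) ^ n - (1 - x))) :=
    c12.isNilpotent_add hz1 hz2
  have hu_eq : x ^ n + (1 - x) ^ n = 1 + ((x ^ n - x) + ((1 - x) ^ n - (1 - x))) := by
    noncomm_ring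
  have hu : IsUnit (x ^ n + (1 - x) ^ n) := by
    rw [hu_eq]; exact hznil.isUnit_one_add
  obtain ⟨U, hU⟩ := hu
  set u := x ^ n + (1 - x) ^ n with hudef
  set v := ((U⁻¹ : Rˣ) : R) with hvdef
  have huv : u * v = 1 := by rw [hvdef, ← hU]; exact U.mul_inv
  have hvu : v * u = 1 := by rw [hvdef, ← hU]; exact U.inv_mul
  have cxu : Commute x u := ((Commute.refl x).pow_right n).add_right (cx1.pow_right n)
  have cxv : x * v = v * x := by
    calc x * v = v * u * (x * v) := by rw [hvu, one_mul]
      _ = v * (u * x) * v := by noncomm_ring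
      _ = v * (x * u) * v := by rw [cxu.eq]
      _ = v * x * (u * v) := by noncomm_ring
      _ = v * x := by rw [huv, mul_one]
  have cvx : Commute v x := cxv.symm
  have cxnv : x ^ n * v = v * x ^ n := ((cvx.pow_right n).symm).eq
  have key1 : x ^ n * u = x ^ n * x ^ n := by
    rw [hudef, mul_add, h1, add_zero]
  refine ⟨n, Nat.le_add_left 1 k, v * x ^ n, v, ?_, rfl, ?_, ?_, ?_⟩
  · calc (v * x ^ n) * (v * x ^ n) = v * ((x ^ n * v) * x ^ n) := by noncomm_ring
      _ = v * ((v * x ^ n) * x ^ n) := by rw [cxnv]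
      _ = v * (v * (x ^ n * u)) := by rw [key1]; noncomm_ring
      _ = v * ((x ^ n * v) * u) := by rw [cxnv]; noncomm_ring
      _ = v * x ^ n * (v * u) := by noncomm_ring
      _ = v * x ^ n := by rw [hvu, mul_one]
  · have h' : v * u - v * x ^ n = v * (1 - x) ^ n := by
      rw [hudef, mul_add]; abel
    rw [← h', hvu]
  · calc x * (v * x ^ n) = (x * v) * x ^ n := by rw [mul_assoc]
      _ = (v * x) * x ^ n := by rw [cxv]
      _ = v * (x * x ^ n) := by rw [mul_assoc]
      _ = v * (x ^ n * x) := by rw [((Commute.refl x).pow_right n).eq]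
      _ = (v * x ^ n) * x := by rw [mul_assoc]
  · have hvxu : v * (x * u) = x := by
      calc v * (x * u) = v * (u * x) := by rw [cxu.eq]
        _ = (v * u) * x := by rw [mul_assoc]
        _ = x := by rw [hvu, one_mul]
    have hsub : x - v * x ^ n = v * (x * u - x ^ n) := by
      rw [mul_sub, hvxu]
    have hw : x * u - x ^ n = x * (1 - x) ^ n - x ^ n * (1 - x) := by
      have hxxn : x * x ^ n = x ^ n * x := ((Commute.refl x).pow_right n).eq
      rw [hudef]
      simp only [mul_add, mul_sub, mul_one]
      rw [hxxn]; abel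
    have ca : Commute x (x - x * x) :=
      (Commute.refl x).sub_right ((Commute.refl x).mul_right (Commute.refl x))
    have cb : Commute (1 - x) (x - x * x) :=
      cx1.symm.sub_right (cx1.symm.mul_right cx1.symm)
    have hA : IsNilpotent (x * (1 - x) ^ n) := by
      have e : x * (1 - x) ^ n = (x - x * x) * (1 - x) ^ k := by
        rw [hn, pow_succ', ← mul_assoc, hxx]
      rw [e]
      exact (cb.symm.pow_right k).isNilpotent_mul_right ⟨k, hk⟩
    have hB : IsNilpotent (x ^ n * (1 - x)) := by
      have e : x ^ n * (1 - x) = x ^ k * (x - x * x) := by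
        rw [hn, pow_succ, mul_assoc, hxx]
      rw [e]
      exact (ca.pow_left k).isNilpotent_mul_left ⟨k, hk⟩
    have cAB : Commute (x * (1 - x) ^ n) (x ^ n * (1 - x)) := by
      have c1 : Commute (x * (1 - x) ^ n) x :=
        (Commute.refl x).mul_left (cx1.symm.pow_left n)
      have c2 : Commute (x * (1 - x) ^ n) (1 - x) :=
        cx1.mul_left ((Commute.refl (1 - x)).pow_left n)
      exact (c1.pow_right n).mul_right c2
    have hwn : IsNilpotent (x * u - x ^ n) := by
      rw [hw]; exact cAB.isNilpotent_sub hA hB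
    have cvu : Commute v u := by
      show v * u = u * v
      rw [hvu, huv]
    have cvw : Commute v (x * u - x ^ n) :=
      (cvx.mul_right cvu).sub_right (cvx.pow_right n)
    rw [hsub]
    exact cvw.isNilpotent_mul_left hwn

lemma s7_snc_of_nil {a : R} (h : IsNilpotent (a - a * a)) : IsStronglyNilCleanElem a := by
  obtain ⟨n, hn, e, v, he, -, -, hcomm, hnil⟩ := s7_core a h
  refine ⟨e, a - e, he, hnil, ?_, by abel⟩
  rw [mul_sub, sub_mul, hcomm, he]

lemma s7_nil_of_snc {a : R} (h : IsStronglyNilCleanElem a) : IsNilpotent (a - a * a) := by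
  obtain ⟨e, q, he, hq, hc, rfl⟩ := h
  have he' : e * e = e := he
  have key : (e + q) - (e + q) * (e + q) = q * (1 - e - e - q) := by
    have h1 : (e + q) - (e + q) * (e + q)
        = q * (1 - e - e - q) + (e - e * e) + (q * e - e * q) := by noncomm_ring
    rw [h1, he', hc]
    simp
  rw [key]
  have cqe : Commute q e := hc.symm
  have c : Commute q (1 - e - e - q) :=
    (((Commute.one_right q).sub_right cqe).sub_right cqe).sub_right (Commute.refl q)
  exact c.isNilpotent_mul_right hq

lemma s7_uu (hC : ∀ a : R, IsCleanElem a → IsStronglyNilCleanElem a) :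
    ∀ u : R, IsUnit u → IsNilpotent (u - 1) := by
  intro u hu
  have hclean : IsCleanElem u := ⟨0, u, by simp [IsIdempotentElem], hu, (zero_add u).symm⟩
  obtain ⟨e, q, he, hq, hcm, hequ⟩ := hC u hclean
  have he' : e * e = e := he
  obtain ⟨v, huv, hvu⟩ := s7_unit_pair hu
  have cqu : q * u = u * q := by
    rw [hequ]
    calc q * (e + q) = q * e + q * q := by rw [mul_add]
      _ = e * q + q * q := by rw [hcm]
      _ = (e + q) * q := by rw [add_mul]
  have cqv : q * v = v * q := s7_comm_inv huv hvu cqu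
  have hvq : IsNilpotent (v * q) := by
    have c : Commute v q := cqv.symm
    exact c.isNilpotent_mul_left hq
  have heu : e = u * (1 - v * q) := by
    rw [mul_sub, mul_one, ← mul_assoc, huv, one_mul]
    rw [hequ]; abel
  have hue : IsUnit e := by
    rw [heu]
    exact hu.mul hvq.isUnit_one_sub
  have he1 : e = 1 := by
    obtain ⟨ε, hε1, hε2⟩ := s7_unit_pair hue
    calc e = 1 * e := (one_mul e).symm
      _ = (ε * e) * e := by rw [hε2]
      _ = ε * (e * e) := by rw [mul_assoc]
      _ = ε * e := by rw [he']
      _ = 1 := hε2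
  have : u - 1 = q := by rw [hequ, he1]; abel
  rwa [this]

lemma s7_two_nil (hC : ∀ a : R, IsCleanElem a → IsStronglyNilCleanElem a) :
    IsNilpotent (2 : R) := by
  have := s7_uu hC (-1) isUnit_one.neg
  have h : ((-1 : R) - 1) = -2 := by norm_num
  rw [h] at this
  simpa using this.neg

lemma s7_LMU (huu : ∀ u : R, IsUnit u → IsNilpotent (u - 1)) (h2 : IsNilpotent (2 : R))
    {f x y : R} (hf : f * f = f) (hf0 : f ≠ 0)
    (hfx : f * x = x) (hyf : y * f = y) (hxy : x * y = f)
    (hfy : f * y = 0) (hxf : x * f = 0) : False := by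
  have hxx : x * x = 0 := by
    calc x * x = x * (f * x) := by rw [hfx]
      _ = (x * f) * x := by rw [mul_assoc]
      _ = 0 := by rw [hxf, zero_mul]
  have hyy : y * y = 0 := by
    calc y * y = (y * f) * y := by rw [hyf]
      _ = y * (f * y) := by rw [mul_assoc]
      _ = 0 := by rw [hfy, mul_zero]
  set m := y * x with hmdef
  have hyx : y * x = m := rfl
  have hmm : m * m = m := by
    calc m * m = y * (x * y) * x := by rw [hmdef]; noncomm_ring
      _ = y * f * x := by rw [hxy]
      _ = y * x := by rw [hyf]
      _ = m := rfl
  have hxm : x * m = x := by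
    calc x * m = (x * y) * x := by rw [hmdef, mul_assoc]
      _ = f * x := by rw [hxy]
      _ = x := hfx
  have hmy : m * y = y := by
    calc m * y = y * (x * y) := by rw [hmdef, mul_assoc]
      _ = y * f := by rw [hxy]
      _ = y := hyf
  have hfm : f * m = 0 := by
    calc f * m = (f * y) * x := by rw [hmdef, mul_assoc]
      _ = 0 := by rw [hfy, zero_mul]
  have hmf : m * f = 0 := by
    calc m * f = y * (x * f) := by rw [hmdef, mul_assoc]
      _ = 0 := by rw [hxf, mul_zero]
  have hmx : m * x = 0 := by
    calc m * x = y * (x * x) := by rw [hmdef, mul_assoc]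
      _ = 0 := by rw [hxx, mul_zero]
  have hym : y * m = 0 := by
    calc y * m = (y * y) * x := by rw [hmdef, mul_assoc]
      _ = 0 := by rw [hyy, zero_mul]
  -- d := x + y - f
  have hd2 : (x + y - f) * (x + y - f) = 2 * f + m - x - y := by
    have e1 : (x + y - f) * (x + y - f)
        = x*x + x*y - x*f + y*x + y*y - y*f - f*x - f*y + f*f := by noncomm_ring
    rw [e1, hxx, hxy, hxf, hyx, hyy, hyf, hfx, hfy, hf]
    noncomm_ring
  have hd3 : ((x + y - f) * (x + y - f)) * (x + y - f) = 2 * (x + y - f) - (f + m) := by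
    rw [hd2]
    have e1 : (2 * f + m - x - y) * (x + y - f)
        = 2*(f*x) + 2*(f*y) - 2*(f*f) + m*x + m*y - m*f - x*x - x*y + x*f - y*x - y*y + y*f := by
      noncomm_ring
    rw [e1, hfx, hfy, hf, hmx, hmy, hmf, hxx, hxy, hxf, hyx, hyy, hyf]
    noncomm_ring
  have hv3 : (1 + (x + y - f)) * (1 + (x + y - f)) * (1 + (x + y - f))
      = 1 + 2 * (x + y + m) := by
    have e1 : (1 + (x + y - f)) * (1 + (x + y - f)) * (1 + (x + y - f))
        = 1 + 3 * (x + y - f) + 3 * ((x + y - f) * (x + y - f))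
          + ((x + y - f) * (x + y - f)) * (x + y - f) := by noncomm_ring
    rw [e1, hd3, hd2]
    noncomm_ring
  have hvu : IsUnit (1 + (x + y - f)) := by
    have hn2u : IsNilpotent (2 * (x + y + m)) :=
      (s7_two_comm (x + y + m)).isNilpotent_mul_right h2
    have h3 : IsUnit ((1 + (x + y - f)) ^ 3) := by
      have e : (1 + (x + y - f)) ^ 3
          = (1 + (x + y - f)) * (1 + (x + y - f)) * (1 + (x + y - f)) := by
        rw [pow_succ, pow_succ, pow_one]
      rw [e, hv3]
      exact hn2u.isUnit_one_add
    exact (isUnit_pow_iff (three_ne_zero (α := ℕ))).mp h3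
  have hd_nil : IsNilpotent (x + y - f) := by
    have := huu _ hvu
    simpa using this
  have hE_eq : f + m = (x + y - f) * (2 - (x + y - f) * (x + y - f)) := by
    have e1 : (x + y - f) * (2 - (x + y - f) * (x + y - f))
        = 2 * (x + y - f) - ((x + y - f) * (x + y - f)) * (x + y - f) := by noncomm_ring
    rw [e1, hd3]
    noncomm_ring
  have cdE : Commute (x + y - f) (2 - (x + y - f) * (x + y - f)) :=
    ((s7_two_comm (x + y - f)).symm).sub_right
      ((Commute.refl _).mul_right (Commute.refl _))
  have hE_nil : IsNilpotent (f + m) := by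
    rw [hE_eq]
    exact cdE.isNilpotent_mul_right hd_nil
  have hE_idem : (f + m) * (f + m) = f + m := by
    have e1 : (f + m) * (f + m) = f*f + f*m + m*f + m*m := by noncomm_ring
    rw [e1, hf, hfm, hmf, hmm]
    simp
  have hE0 : f + m = 0 := s7_idem_zero hE_idem hE_nil
  have hff : f = f * (f + m) := by rw [mul_add, hf, hfm, add_zero]
  rw [hE0, mul_zero] at hff
  exact hf0 hff

lemma s7_sq_zero_mem_jac
    (huu : ∀ u : R, IsUnit u → IsNilpotent (u - 1)) (h2 : IsNilpotent (2 : R))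
    (hS : ∀ I : Ideal R, ¬ I ≤ (⊥ : Ideal R).jacobson → ∃ e ∈ I, e ≠ 0 ∧ IsIdempotentElem e)
    (z : R) (hz : z * z = 0) : z ∈ (⊥ : Ideal R).jacobson := by
  by_contra hzJ
  have hspan : ¬ Ideal.span {z} ≤ (⊥ : Ideal R).jacobson := by
    intro hle
    exact hzJ (hle (Ideal.subset_span (Set.mem_singleton z)))
  obtain ⟨f, hfI, hf0, hfidem⟩ := hS _ hspan
  have hf : f * f = f := hfidem
  obtain ⟨w, hw⟩ := Submodule.mem_span_singleton.mp hfI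
  rw [smul_eq_mul] at hw
  -- hw : w * z = f
  have hfz : f * z = 0 := by
    calc f * z = (w * z) * z := by rw [hw]
      _ = w * (z * z) := by rw [mul_assoc]
      _ = 0 := by rw [hz, mul_zero]
  have h1f : (1 - f) * f = 0 := by rw [sub_mul, one_mul, hf, sub_self]
  have hxy : (f * w * (1 - f)) * (z * f) = f := by
    have h1 : (1 - f) * (z * f) = z * f := by
      have e : (1 - f) * (z * f) = z * f - (f * z) * f := by noncomm_ring
      rw [e, hfz, zero_mul, sub_zero]
    calc (f * w * (1 - f)) * (z * f) = f * w * ((1 - f) * (z * f)) := by noncomm_ring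
      _ = f * w * (z * f) := by rw [h1]
      _ = f * (w * z) * f := by noncomm_ring
      _ = f * f * f := by rw [hw]
      _ = f := by rw [hf, hf]
  have hfx : f * (f * w * (1 - f)) = f * w * (1 - f) := by
    calc f * (f * w * (1 - f)) = (f * f) * w * (1 - f) := by noncomm_ring
      _ = f * w * (1 - f) := by rw [hf]
  have hyf : (z * f) * f = z * f := by
    calc (z * f) * f = z * (f * f) := by rw [mul_assoc]
      _ = z * f := by rw [hf]
  have hfy : f * (z * f) = 0 := by
    calc f * (z * f) = (f * z) * f := by rw [mul_assoc]
      _ = 0 := by rw [hfz, zero_mul]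
  have hxf : (f * w * (1 - f)) * f = 0 := by
    calc (f * w * (1 - f)) * f = f * w * ((1 - f) * f) := by noncomm_ring
      _ = 0 := by rw [h1f, mul_zero]
  exact s7_LMU huu h2 hf hf0 hfx hyf hxy hfy hxf

lemma s7_comm_idem_jac
    (hsq : ∀ z : R, z * z = 0 → z ∈ (⊥ : Ideal R).jacobson)
    {g : R} (hg : g * g = g) (c : R) : g * c - c * g ∈ (⊥ : Ideal R).jacobson := by
  have h1g : (1 - g) * g = 0 := by rw [sub_mul, one_mul, hg, sub_self]
  have hg1 : g * (1 - g) = 0 := by rw [mul_sub, mul_one, hg, sub_self]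
  have t1 : (g * c * (1 - g)) * (g * c * (1 - g)) = 0 := by
    calc (g * c * (1 - g)) * (g * c * (1 - g)) = g * c * (((1 - g) * g) * (c * (1 - g))) := by
          noncomm_ring
      _ = 0 := by rw [h1g, zero_mul, mul_zero]
  have t2 : ((1 - g) * c * g) * ((1 - g) * c * g) = 0 := by
    calc ((1 - g) * c * g) * ((1 - g) * c * g) = (1 - g) * c * ((g * (1 - g)) * (c * g)) := by
          noncomm_ring
      _ = 0 := by rw [hg1, zero_mul, mul_zero]
  have m1 := hsq _ t1
  have m2 := hsq _ t2
  have key : g * c - c * g = (g * c * (1 - g)) - ((1 - g) * c * g) := by noncomm_ring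
  rw [key]
  exact Submodule.sub_mem _ m1 m2

lemma s7_corner_unit (hg : (g : R) * g = g) {j : R} (hj : j ∈ (⊥ : Ideal R).jacobson)
    (hgj : g * j = j) (hjg : j * g = j) :
    ∃ w, g * w = w ∧ w * g = w ∧ (g + j) * w = g ∧ w * (g + j) = g := by
  have hu : IsUnit (1 + j) := s7_one_add_unit hj
  obtain ⟨W, hUW, hWU⟩ := s7_unit_pair hu
  have hcg : g * (1 + j) = (1 + j) * g := by
    rw [mul_add, add_mul, mul_one, one_mul, hgj, hjg]
  have hgW : g * W = W * g := s7_comm_inv hUW hWU hcg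
  have hgu : g * (1 + j) = g + j := by rw [mul_add, mul_one, hgj]
  refine ⟨g * W, ?_, ?_, ?_, ?_⟩
  · rw [← mul_assoc, hg]
  · rw [mul_assoc, ← hgW, ← mul_assoc, hg]
  · calc (g + j) * (g * W) = (g * (1 + j)) * (g * W) := by rw [hgu]
      _ = g * ((1 + j) * g) * W := by noncomm_ring
      _ = g * (g * (1 + j)) * W := by rw [hcg]
      _ = (g * g) * ((1 + j) * W) := by noncomm_ring
      _ = g := by rw [hg, hUW, mul_one]
  · calc (g * W) * (g + j) = (g * W) * (g * (1 + j)) := by rw [hgu]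
      _ = g * (W * g) * (1 + j) := by noncomm_ring
      _ = g * (g * W) * (1 + j) := by rw [hgW]
      _ = (g * g) * (W * (1 + j)) := by noncomm_ring
      _ = g := by rw [hg, hWU, mul_one]

lemma s7_corner_nilunit {g D κ : R} (hgκ : g * κ = κ) (hDκ : D * κ = g)
    (hn : IsNilpotent D) : g = 0 := by
  obtain ⟨m, hm⟩ := hn
  have key : ∀ k : ℕ, D ^ (k + 1) * κ ^ (k + 1) = g := by
    intro k
    induction k with
    | zero => simpa using hDκ
    | succ k ih =>
      have hgκp : g * κ ^ (k + 1) = κ ^ (k + 1) := by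
        rw [pow_succ' κ k, ← mul_assoc, hgκ]
      calc D ^ (k + 2) * κ ^ (k + 2) = (D ^ (k + 1) * D) * (κ * κ ^ (k + 1)) := by
            rw [pow_succ D (k + 1), pow_succ' κ (k + 1)]
        _ = D ^ (k + 1) * ((D * κ) * κ ^ (k + 1)) := by noncomm_ring
        _ = D ^ (k + 1) * (g * κ ^ (k + 1)) := by rw [hDκ]
        _ = D ^ (k + 1) * κ ^ (k + 1) := by rw [hgκp]
        _ = g := ih
  have hz : D ^ (m + 1) = 0 := by rw [pow_succ, hm, zero_mul]
  have := key m
  rw [hz, zero_mul] at this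
  exact this.symm

lemma s7_main
    (huu : ∀ u : R, IsUnit u → IsNilpotent (u - 1)) (h2 : IsNilpotent (2 : R))
    (hsq : ∀ z : R, z * z = 0 → z ∈ (⊥ : Ideal R).jacobson)
    (hS : ∀ I : Ideal R, ¬ I ≤ (⊥ : Ideal R).jacobson → ∃ e ∈ I, e ≠ 0 ∧ IsIdempotentElem e)
    (a : R) : a - a * a ∈ (⊥ : Ideal R).jacobson := by
  by_contra hc
  have hspan : ¬ Ideal.span {a - a * a} ≤ (⊥ : Ideal R).jacobson := by
    intro hle
    exact hc (hle (Ideal.subset_span (Set.mem_singleton _)))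
  obtain ⟨g, hgI, hg0, hgidem⟩ := hS _ hspan
  have hg : g * g = g := hgidem
  obtain ⟨r, hr⟩ := Submodule.mem_span_singleton.mp hgI
  rw [smul_eq_mul] at hr
  -- hr : r * (a - a * a) = g
  have hL : ∀ t : R, g * (g * t) = g * t := fun t => by rw [← mul_assoc, hg]
  have hR : ∀ t : R, (t * g) * g = t * g := fun t => by rw [mul_assoc, hg]
  set c := a - a * a with hcdef
  set t₁ := g * (r * g) with ht₁def
  set t₂ := g * (c * g) with ht₂def
  have hgt₂ : g * t₂ = t₂ := by rw [ht₂def]; exact hL _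
  have ht₂g : t₂ * g = t₂ := by
    rw [ht₂def]
    calc (g * (c * g)) * g = g * ((c * g) * g) := by rw [mul_assoc]
      _ = g * (c * g) := by rw [hR]
  have hgt₁ : g * t₁ = t₁ := by rw [ht₁def]; exact hL _
  have ht₁g : t₁ * g = t₁ := by
    rw [ht₁def]
    calc (g * (r * g)) * g = g * ((r * g) * g) := by rw [mul_assoc]
      _ = g * (r * g) := by rw [hR]
  set j := g * (r * ((g * c - c * g) * g)) with hjdef
  have hjmem : j ∈ (⊥ : Ideal R).jacobson := by
    have hδ : g * c - c * g ∈ (⊥ : Ideal R).jacobson := s7_comm_idem_jac hsq hg c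
    have h1 : (g * c - c * g) * g ∈ (⊥ : Ideal R).jacobson := s7_jac_mul_right hδ g
    have h2' : r * ((g * c - c * g) * g) ∈ (⊥ : Ideal R).jacobson :=
      Ideal.mul_mem_left _ r h1
    exact Ideal.mul_mem_left _ g h2'
  have hgj : g * j = j := by rw [hjdef]; exact hL _
  have hjg : j * g = j := by
    rw [hjdef]
    calc (g * (r * ((g * c - c * g) * g))) * g
        = g * (r * ((g * c - c * g) * (g * g))) := by noncomm_ring
      _ = g * (r * ((g * c - c * g) * g)) := by rw [hg]
  have hkey : t₁ * t₂ = g + j := by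
    have e0 : t₁ * t₂ = g * (r * (g * (c * g))) := by
      rw [ht₁def, ht₂def]
      calc (g * (r * g)) * (g * (c * g)) = g * (r * ((g * g) * (c * g))) := by noncomm_ring
        _ = g * (r * (g * (c * g))) := by rw [hg]
    have e1 : g * (r * (g * (c * g))) = j + g * ((r * c) * (g * g)) := by
      rw [hjdef]; noncomm_ring
    have e2 : g * ((r * c) * (g * g)) = g := by rw [hg, hr, hg, hg]
    rw [e0, e1, e2, add_comm]
  obtain ⟨w₀, hgw₀, hw₀g, hvw₀, hw₀v⟩ := s7_corner_unit hg hjmem hgj hjg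
  set ℓ := w₀ * t₁ with hℓdef
  have hℓt₂ : ℓ * t₂ = g := by
    calc ℓ * t₂ = w₀ * (t₁ * t₂) := by rw [hℓdef, mul_assoc]
      _ = w₀ * (g + j) := by rw [hkey]
      _ = g := hw₀v
  have hgℓ : g * ℓ = ℓ := by
    calc g * ℓ = (g * w₀) * t₁ := by rw [hℓdef, mul_assoc]
      _ = w₀ * t₁ := by rw [hgw₀]
  have hℓg : ℓ * g = ℓ := by
    calc ℓ * g = w₀ * (t₁ * g) := by rw [hℓdef, mul_assoc]
      _ = w₀ * t₁ := by rw [ht₁g]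
  by_cases hp : t₂ * ℓ = g
  · -- corner case: B := g * (a * g) behaves like a unit-related elt
    set B := g * (a * g) with hBdef
    have hgB : g * B = B := by rw [hBdef]; exact hL _
    have hBg : B * g = B := by
      rw [hBdef]
      calc (g * (a * g)) * g = g * ((a * g) * g) := by rw [mul_assoc]
        _ = g * (a * g) := by rw [hR]
    have hB2 : B * B = g * (a * (g * (a * g))) := by
      rw [hBdef]
      calc (g * (a * g)) * (g * (a * g)) = g * (a * ((g * g) * (a * g))) := by noncomm_ring
        _ = g * (a * (g * (a * g))) := by rw [hg]
    set j₂ := (g * (a * (1 - g))) * (a * g) with hj₂def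
    have hj₂mem : j₂ ∈ (⊥ : Ideal R).jacobson := by
      have h1g : (1 - g) * g = 0 := by rw [sub_mul, one_mul, hg, sub_self]
      have sqz : (g * (a * (1 - g))) * (g * (a * (1 - g))) = 0 := by
        calc (g * (a * (1 - g))) * (g * (a * (1 - g)))
            = g * (a * (((1 - g) * g) * (a * (1 - g)))) := by noncomm_ring
          _ = 0 := by rw [h1g, zero_mul, mul_zero, mul_zero]
      exact s7_jac_mul_right (hsq _ sqz) (a * g)
    have hgj₂ : g * j₂ = j₂ := by
      rw [hj₂def]
      calc g * ((g * (a * (1 - g))) * (a * g)) = (g * (g * (a * (1 - g)))) * (a * g) := by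
            noncomm_ring
        _ = (g * (a * (1 - g))) * (a * g) := by rw [hL]
    have hj₂g : j₂ * g = j₂ := by
      rw [hj₂def]
      calc ((g * (a * (1 - g))) * (a * g)) * g = (g * (a * (1 - g))) * (a * (g * g)) := by
            noncomm_ring
        _ = (g * (a * (1 - g))) * (a * g) := by rw [hg]
    have hβ : B - B * B = t₂ + j₂ := by
      rw [hB2, hBdef, ht₂def, hj₂def, hcdef]
      noncomm_ring
    -- corner unit for g + ℓ * j₂
    have hmemℓj : ℓ * j₂ ∈ (⊥ : Ideal R).jacobson := Ideal.mul_mem_left _ ℓ hj₂mem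
    have hgℓj : g * (ℓ * j₂) = ℓ * j₂ := by rw [← mul_assoc, hgℓ]
    have hℓjg : (ℓ * j₂) * g = ℓ * j₂ := by rw [mul_assoc, hj₂g]
    obtain ⟨w₁, hgw₁, hw₁g, hv₁w₁, hw₁v₁⟩ := s7_corner_unit hg hmemℓj hgℓj hℓjg
    set γ := w₁ * ℓ with hγdef
    have hβfact : B - B * B = t₂ * (g + ℓ * j₂) := by
      rw [hβ]
      calc t₂ + j₂ = t₂ + g * j₂ := by rw [hgj₂]
        _ = t₂ + (t₂ * ℓ) * j₂ := by rw [hp]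
        _ = t₂ * g + t₂ * (ℓ * j₂) := by rw [ht₂g, mul_assoc]
        _ = t₂ * (g + ℓ * j₂) := by rw [mul_add]
    have hβγ : (B - B * B) * γ = g := by
      calc (B - B * B) * γ = (t₂ * (g + ℓ * j₂)) * (w₁ * ℓ) := by rw [hβfact, hγdef]
        _ = t₂ * (((g + ℓ * j₂)) * w₁) * ℓ := by noncomm_ring
        _ = t₂ * g * ℓ := by rw [hv₁w₁]
        _ = t₂ * ℓ := by rw [ht₂g]
        _ = g := hp
    have hγβ : γ * (B - B * B) = g := by
      calc γ * (B - B * B) = (w₁ * ℓ) * (t₂ + j₂) := by rw [hβ, hγdef]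
        _ = w₁ * (ℓ * t₂) + w₁ * (ℓ * j₂) := by noncomm_ring
        _ = w₁ * g + w₁ * (ℓ * j₂) := by rw [hℓt₂]
        _ = w₁ * (g + ℓ * j₂) := by rw [mul_add]
        _ = g := hw₁v₁
    have hγg : γ * g = γ := by
      calc γ * g = w₁ * (ℓ * g) := by rw [hγdef, mul_assoc]
        _ = w₁ * ℓ := by rw [hℓg]
    have hgγ : g * γ = γ := by
      calc g * γ = (g * w₁) * ℓ := by rw [hγdef, ← mul_assoc]
        _ = w₁ * ℓ := by rw [hgw₁]
    have hcommB : γ * B = B * γ := by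
      have hBβ : B * (B - B * B) = (B - B * B) * B := by noncomm_ring
      calc γ * B = γ * (B * g) := by rw [hBg]
        _ = γ * (B * ((B - B * B) * γ)) := by rw [hβγ]
        _ = γ * ((B * (B - B * B)) * γ) := by noncomm_ring
        _ = γ * (((B - B * B) * B) * γ) := by rw [hBβ]
        _ = (γ * (B - B * B)) * (B * γ) := by noncomm_ring
        _ = g * (B * γ) := by rw [hγβ]
        _ = (g * B) * γ := by rw [← mul_assoc]
        _ = B * γ := by rw [hgB]
    -- B is a corner unit; derive nilpotency of B - g via UU
    have hBwB : B * ((g - B) * γ) = g := by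
      calc B * ((g - B) * γ) = (B * g - B * B) * γ := by noncomm_ring
        _ = (B - B * B) * γ := by rw [hBg]
        _ = g := hβγ
    have hgwB : g * ((g - B) * γ) = (g - B) * γ := by
      calc g * ((g - B) * γ) = (g * g - g * B) * γ := by noncomm_ring
        _ = (g - B) * γ := by rw [hg, hgB]
    have hwBg : ((g - B) * γ) * g = (g - B) * γ := by rw [mul_assoc, hγg]
    have hwBB : ((g - B) * γ) * B = g := by
      calc ((g - B) * γ) * B = (g - B) * (γ * B) := by rw [mul_assoc]
        _ = (g - B) * (B * γ) := by rw [hcommB]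
        _ = (g * B - B * B) * γ := by noncomm_ring
        _ = (B - B * B) * γ := by rw [hgB]
        _ = g := hβγ
    have hVunit : IsUnit (B + (1 - g)) := by
      refine ⟨⟨B + (1 - g), (g - B) * γ + (1 - g), ?_, ?_⟩, rfl⟩
      · have e : (B + (1 - g)) * ((g - B) * γ + (1 - g))
            = B * ((g - B) * γ) + (B - B * g) + (((g - B) * γ) - g * ((g - B) * γ))
              + (1 - g - g + g * g) := by noncomm_ring
        rw [e, hBwB, hBg, hgwB, hg]
        abel
      · have e : ((g - B) * γ + (1 - g)) * (B + (1 - g))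
            = ((g - B) * γ) * B + (((g - B) * γ) - ((g - B) * γ) * g) + (B - g * B)
              + (1 - g - g + g * g) := by noncomm_ring
        rw [e, hwBB, hwBg, hgB, hg]
        abel
    have hDnil : IsNilpotent (B - g) := by
      have := huu _ hVunit
      have e : B + (1 - g) - 1 = B - g := by abel
      rwa [e] at this
    have hDκ : (B - g) * (-(B * γ)) = g := by
      calc (B - g) * (-(B * γ)) = (g * B - B * B) * γ := by noncomm_ring
        _ = (B - B * B) * γ := by rw [hgB]
        _ = g := hβγ
    have hgκ : g * (-(B * γ)) = -(B * γ) := by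
      calc g * (-(B * γ)) = -((g * B) * γ) := by noncomm_ring
        _ = -(B * γ) := by rw [hgB]
    exact hg0 (s7_corner_nilunit hgκ hDκ hDnil)
  · -- matrix units case
    have hgp : g * (t₂ * ℓ) = t₂ * ℓ := by rw [← mul_assoc, hgt₂]
    have hpg : (t₂ * ℓ) * g = t₂ * ℓ := by rw [mul_assoc, hℓg]
    have hpp : (t₂ * ℓ) * (t₂ * ℓ) = t₂ * ℓ := by
      calc (t₂ * ℓ) * (t₂ * ℓ) = t₂ * ((ℓ * t₂) * ℓ) := by noncomm_ring
        _ = t₂ * (g * ℓ) := by rw [hℓt₂]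
        _ = t₂ * ℓ := by rw [hgℓ]
    have hf₀0 : g - t₂ * ℓ ≠ 0 := sub_ne_zero.mpr (fun h => hp h.symm)
    have hf₀ : (g - t₂ * ℓ) * (g - t₂ * ℓ) = g - t₂ * ℓ := by
      have e : (g - t₂ * ℓ) * (g - t₂ * ℓ)
          = g * g - g * (t₂ * ℓ) - (t₂ * ℓ) * g + (t₂ * ℓ) * (t₂ * ℓ) := by noncomm_ring
      rw [e, hg, hgp, hpg, hpp]
      abel
    have hgf₀ : g * (g - t₂ * ℓ) = g - t₂ * ℓ := by rw [mul_sub, hg, hgp]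
    have hf₀t₂ : (g - t₂ * ℓ) * t₂ = 0 := by
      have e : (g - t₂ * ℓ) * t₂ = g * t₂ - t₂ * (ℓ * t₂) := by noncomm_ring
      rw [e, hgt₂, hℓt₂, ht₂g, sub_self]
    have hℓf₀ : ℓ * (g - t₂ * ℓ) = 0 := by
      have e : ℓ * (g - t₂ * ℓ) = ℓ * g - (ℓ * t₂) * ℓ := by noncomm_ring
      rw [e, hℓg, hℓt₂, hgℓ, sub_self]
    have hfx : (g - t₂ * ℓ) * ((g - t₂ * ℓ) * ℓ) = (g - t₂ * ℓ) * ℓ := by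
      rw [← mul_assoc, hf₀]
    have hyf : (t₂ * (g - t₂ * ℓ)) * (g - t₂ * ℓ) = t₂ * (g - t₂ * ℓ) := by
      rw [mul_assoc, hf₀]
    have hxy : ((g - t₂ * ℓ) * ℓ) * (t₂ * (g - t₂ * ℓ)) = g - t₂ * ℓ := by
      calc ((g - t₂ * ℓ) * ℓ) * (t₂ * (g - t₂ * ℓ))
          = (g - t₂ * ℓ) * ((ℓ * t₂) * (g - t₂ * ℓ)) := by noncomm_ring
        _ = (g - t₂ * ℓ) * (g * (g - t₂ * ℓ)) := by rw [hℓt₂]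
        _ = (g - t₂ * ℓ) * (g - t₂ * ℓ) := by rw [hgf₀]
        _ = g - t₂ * ℓ := hf₀
    have hfy : (g - t₂ * ℓ) * (t₂ * (g - t₂ * ℓ)) = 0 := by
      rw [← mul_assoc, hf₀t₂, zero_mul]
    have hxf : ((g - t₂ * ℓ) * ℓ) * (g - t₂ * ℓ) = 0 := by
      rw [mul_assoc, hℓf₀, mul_zero]
    exact s7_LMU huu h2 hf₀ hf₀0 hfx hyf hxy hfy hxf

lemma s7_semipotent (h : ∀ a : R, IsStronglyNilCleanElem a) :
    ∀ I : Ideal R, ¬ I ≤ (⊥ : Ideal R).jacobson → ∃ e ∈ I, e ≠ 0 ∧ IsIdempotentElem e := by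
  intro I hI
  obtain ⟨a, haI, haJ⟩ := SetLike.not_le_iff_exists.mp hI
  rw [Ideal.jacobson, Submodule.mem_sInf] at haJ
  push_neg at haJ
  obtain ⟨M, hMmem, haM⟩ := haJ
  obtain ⟨-, hMmax⟩ := hMmem
  have hsup : M ⊔ Ideal.span {a} = ⊤ := by
    have hlt : M < M ⊔ Ideal.span {a} := by
      refine lt_of_le_of_ne le_sup_left ?_
      intro heq
      apply haM
      have : Ideal.span {a} ≤ M := by
        rw [heq]
        exact le_sup_right
      exact this (Ideal.subset_span (Set.mem_singleton a))
    exact hMmax.out.2 _ hlt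
  have h1mem : (1 : R) ∈ M ⊔ Ideal.span {a} := by rw [hsup]; exact Submodule.mem_top
  obtain ⟨m, hmM, s, hsspan, hms⟩ := Submodule.mem_sup.mp h1mem
  obtain ⟨r, hrs⟩ := Submodule.mem_span_singleton.mp hsspan
  rw [smul_eq_mul] at hrs
  -- hms : m + s = 1, hrs : r * a = s
  have hx : IsNilpotent (r * a - (r * a) * (r * a)) := s7_nil_of_snc (h (r * a))
  obtain ⟨n, hn1, e, v, he, hev, h1e, -, -⟩ := s7_core (r * a) hx
  obtain ⟨k, rfl⟩ : ∃ k, n = k + 1 := ⟨n - 1, (Nat.succ_pred_eq_of_pos hn1).symm⟩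
  refine ⟨e, ?_, ?_, he⟩
  · -- e ∈ I
    rw [hev, pow_succ, ← mul_assoc]
    exact Ideal.mul_mem_left _ _ (Ideal.mul_mem_left _ _ haI)
  · -- e ≠ 0
    intro he0
    rw [he0, sub_zero] at h1e
    have hmx : (1 : R) - r * a = m := by rw [hrs, ← hms]; abel
    have hpow : (1 - r * a) ^ (k + 1) ∈ M := by
      rw [pow_succ]
      exact Ideal.mul_mem_left _ _ (hmx ▸ hmM)
    have h1M : (1 : R) ∈ M := by
      rw [h1e]
      exact Ideal.mul_mem_left _ _ hpow
    exact hMmax.ne_top ((Ideal.eq_top_iff_one M).mpr h1M)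

end Aux

theorem stmt_7 (R : Type*) [Ring R] :
    (∀ a : R, IsStronglyNilCleanElem a) ↔ IsCSNCRing R ∧ IsSemipotentRing R := by
  constructor
  · intro h
    exact ⟨fun a _ => h a, s7_semipotent h⟩
  · rintro ⟨hC, hS⟩ a
    have huu := s7_uu hC
    have h2 := s7_two_nil hC
    have hsq : ∀ z : R, z * z = 0 → z ∈ (⊥ : Ideal R).jacobson :=
      fun z hz => s7_sq_zero_mem_jac huu h2 hS z hz
    have hmain := s7_main huu h2 hsq hS a
    have hnil : IsNilpotent (a - a * a) := by
      have hu := s7_one_add_unit hmain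
      have := huu _ hu
      simpa using this
    exact s7_snc_of_nil hnil
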